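/- Let (ε_1,…,ε_n) be an admissible word with n ≥ 1. The basic interval I(ε_1,…,ε_n) is full (i.e. |I(ε_1,…,ε_n)| = β^{−n}) if and only if for every m ≥ 1 and every admissible word (ε'_1,…,ε'_m), the concatenation (ε_1,…,ε_n,ε'_1,…,ε'_m) is admissible. -/

import Mathlib

open MeasureTheory Filter Set

noncomputable section

/-- The β-transformation on `(0,1]`: `T_β x = βx − ⌈βx⌉ + 1`. -/
def Tbeta (β x : ℝ) : ℝ := β * x - ⌈β * x⌉ + 1

/-- The digits of the β-expansion, 0-indexed: `eps β x n` is the `(n+1)`-st digit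
`ε_{n+1}(x,β) = ⌈β T_β^n x⌉ − 1`. -/
def eps (β x : ℝ) (n : ℕ) : ℤ := ⌈β * (Tbeta β)^[n] x⌉ - 1

/-- The basic interval of order `n` containing `x`:
all `y ∈ (0,1]` whose first `n` digits agree with those of `x`. -/
def In (β x : ℝ) (n : ℕ) : Set ℝ := {y ∈ Ioc (0:ℝ) 1 | ∀ j < n, eps β y j = eps β x j}

/-- The length of a set (Lebesgue measure). -/
def len (s : Set ℝ) : ℝ := (volume s).toReal

/-- `tseq β n = t_n`: the maximal length of the block of zero digits of the
β-expansion of `1` immediately following position `n` (digits `ε*_{n+1},…,ε*_{n+k}`). -/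
def tseq (β : ℝ) (n : ℕ) : ℕ := sSup {k : ℕ | ∀ j < k, eps β 1 (n + j) = 0}

/-- `Gam β n = Γ_n = max_{1 ≤ k ≤ n} t_k`. -/
def Gam (β : ℝ) (n : ℕ) : ℕ := Finset.sup (Finset.Icc 1 n) (tseq β)

/-- `lam β = λ(β) = limsup_n Γ_n / n`. -/
def lam (β : ℝ) : ℝ := Filter.limsup (fun n : ℕ => (Gam β n : ℝ) / n) atTop

/-- `kstar β x n = k_n^*(x)`: the smallest `k ≥ 0` such that
`(ε_{k+1}(x),…,ε_n(x)) = (ε*_1,…,ε*_{n−k})`. -/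
def kstar (β x : ℝ) (n : ℕ) : ℕ := sInf {k : ℕ | ∀ i < n - k, eps β x (k + i) = eps β 1 i}

/-- `tau β x = τ(x) = limsup_n t_{n − k_n^*(x)} / n`. -/
def tau (β x : ℝ) : ℝ :=
  Filter.limsup (fun n : ℕ => (tseq β (n - kstar β x n) : ℝ) / n) atTop

/-- The upper density `\overline{D}(x) = limsup_n (−log_β |I_n(x)|)/n`. -/
def upperD (β x : ℝ) : ℝ :=
  Filter.limsup (fun n : ℕ => -Real.logb β (len (In β x n)) / n) atTop

/-- The lower density `\underline{D}(x) = liminf_n (−log_β |I_n(x)|)/n`. -/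
def lowerD (β x : ℝ) : ℝ :=
  Filter.liminf (fun n : ℕ => -Real.logb β (len (In β x n)) / n) atTop

/-- The basic interval (cylinder) associated to a finite word `w` of digits:
all `x ∈ (0,1]` whose β-expansion starts with `w`. -/
def cyl (β : ℝ) (w : List ℤ) : Set ℝ :=
  {x ∈ Ioc (0:ℝ) 1 | ∀ j < w.length, eps β x j = w.getD j 0}

/-- A finite word is admissible if it occurs as the initial digits of some `x ∈ (0,1]`. -/
def Admissible (β : ℝ) (w : List ℤ) : Prop := (cyl β w).Nonempty

/-- A basic interval is full if its length is `β^{−n}` where `n` is the order. -/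
def IsFull (β : ℝ) (w : List ℤ) : Prop := len (cyl β w) = β ^ (-(w.length : ℤ))

/-- The word `(ε*_1,…,ε*_n)` of the first `n` digits of the β-expansion of `1`. -/
def estarWord (β : ℝ) (n : ℕ) : List ℤ := (List.range n).map (eps β 1)

/-- The interior of a set relative to the subspace `[0,1]`
(for `S ⊆ [0,1]` this is exactly the interior of `S` in the topology of `[0,1]`). -/
def intIn01 (S : Set ℝ) : Set ℝ := Icc 0 1 \ closure (Icc 0 1 \ S)


section Aux

variable {β : ℝ}

lemma Tbeta_mem_Ioc (β x : ℝ) : Tbeta β x ∈ Ioc (0:ℝ) 1 := by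
  have h1 := Int.ceil_lt_add_one (β * x)
  have h2 := Int.le_ceil (β * x)
  rw [Set.mem_Ioc]
  unfold Tbeta
  constructor <;> linarith

lemma iterate_mem_Ioc {x : ℝ} (hx : x ∈ Ioc (0:ℝ) 1) (n : ℕ) :
    (Tbeta β)^[n] x ∈ Ioc (0:ℝ) 1 := by
  cases n with
  | zero => simpa using hx
  | succ n => rw [Function.iterate_succ_apply']; exact Tbeta_mem_Ioc β _

lemma eps_Tbeta (β x : ℝ) (j : ℕ) : eps β (Tbeta β x) j = eps β x (j + 1) := by
  unfold eps
  rw [Function.iterate_succ_apply]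

lemma eps_zero (β x : ℝ) : eps β x 0 = ⌈β * x⌉ - 1 := by
  unfold eps; simp

lemma cyl_subset_Ioc (β : ℝ) (w : List ℤ) : cyl β w ⊆ Ioc (0:ℝ) 1 := fun _ hx => hx.1

lemma mem_cyl_nil {x : ℝ} : x ∈ cyl β [] ↔ x ∈ Ioc (0:ℝ) 1 := by
  constructor
  · exact fun h => h.1
  · intro h; exact ⟨h, by intro j hj; simp at hj⟩

lemma mem_cyl_cons {x : ℝ} {d : ℤ} {w : List ℤ} :
    x ∈ cyl β (d :: w) ↔ x ∈ Ioc (0:ℝ) 1 ∧ eps β x 0 = d ∧ Tbeta β x ∈ cyl β w := by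
  constructor
  · rintro ⟨hx, h⟩
    refine ⟨hx, by simpa using h 0 (by simp), Tbeta_mem_Ioc β x, ?_⟩
    intro j hj
    rw [eps_Tbeta]
    simpa using h (j + 1) (by simpa using Nat.succ_lt_succ hj)
  · rintro ⟨hx, h0, _, h⟩
    refine ⟨hx, ?_⟩
    intro j hj
    cases j with
    | zero => simpa using h0
    | succ j =>
      rw [← eps_Tbeta]
      simpa using h j (by simp at hj; omega)

lemma Tbeta_eq_of_eps {x : ℝ} {d : ℤ} (h : eps β x 0 = d) : Tbeta β x = β * x - d := by
  rw [eps_zero] at h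
  have h1 : (⌈β * x⌉ : ℤ) = d + 1 := by omega
  unfold Tbeta
  rw [h1]
  push_cast
  ring

/-- The constant such that `T^n x = β^n x - Cw w` on `cyl β w`. -/
def Cw (β : ℝ) : List ℤ → ℝ
  | [] => 0
  | d :: w => β ^ w.length * d + Cw β w

lemma iterate_eq_affine {w : List ℤ} :
    ∀ x ∈ cyl β w, (Tbeta β)^[w.length] x = β ^ w.length * x - Cw β w := by
  induction w with
  | nil => intro x _; simp [Cw]
  | cons d w ih =>
    intro x hx
    rw [mem_cyl_cons] at hx
    obtain ⟨hx1, h0, hT⟩ := hx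
    rw [List.length_cons, Function.iterate_succ_apply, ih _ hT, Tbeta_eq_of_eps h0]
    simp only [Cw]
    rw [pow_succ]
    ring

lemma cyl_ordConnected (hβ : 0 < β) {w : List ℤ} :
    ∀ x ∈ cyl β w, ∀ z ∈ cyl β w, ∀ y, x ≤ y → y ≤ z → y ∈ cyl β w := by
  induction w with
  | nil =>
    intro x hx z hz y h1 h2
    rw [mem_cyl_nil] at hx hz ⊢
    exact ⟨lt_of_lt_of_le hx.1 h1, le_trans h2 hz.2⟩
  | cons d w ih =>
    intro x hx z hz y h1 h2
    rw [mem_cyl_cons] at hx hz ⊢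
    have hy : y ∈ Ioc (0:ℝ) 1 := ⟨lt_of_lt_of_le hx.1.1 h1, le_trans h2 hz.1.2⟩
    have hcx : ⌈β * x⌉ = d + 1 := by have := hx.2.1; rw [eps_zero] at this; omega
    have hcz : ⌈β * z⌉ = d + 1 := by have := hz.2.1; rw [eps_zero] at this; omega
    have hcy : ⌈β * y⌉ = d + 1 := by
      have l1 : ⌈β * x⌉ ≤ ⌈β * y⌉ :=
        Int.ceil_le_ceil (mul_le_mul_of_nonneg_left h1 hβ.le)
      have l2 : ⌈β * y⌉ ≤ ⌈β * z⌉ :=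
        Int.ceil_le_ceil (mul_le_mul_of_nonneg_left h2 hβ.le)
      omega
    have hey : eps β y 0 = d := by rw [eps_zero, hcy]; ring
    refine ⟨hy, hey, ?_⟩
    have hTx := Tbeta_eq_of_eps hx.2.1
    have hTz := Tbeta_eq_of_eps hz.2.1
    have hTy := Tbeta_eq_of_eps hey
    refine ih _ hx.2.2 _ hz.2.2 _ ?_ ?_
    · rw [hTx, hTy]
      have := mul_le_mul_of_nonneg_left h1 hβ.le
      linarith
    · rw [hTy, hTz]
      have := mul_le_mul_of_nonneg_left h2 hβ.le
      linarith

lemma exists_Ioc_subset_cyl (hβ : 0 < β) {w : List ℤ} :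
    ∀ x ∈ cyl β w, ∃ δ > 0, Ioc (x - δ) x ⊆ cyl β w := by
  induction w with
  | nil =>
    intro x hx
    rw [mem_cyl_nil] at hx
    refine ⟨x, hx.1, ?_⟩
    intro y hy
    rw [mem_cyl_nil]
    exact ⟨by linarith [hy.1], le_trans hy.2 hx.2⟩
  | cons d w ih =>
    intro x hx
    rw [mem_cyl_cons] at hx
    obtain ⟨hx1, h0, hT⟩ := hx
    obtain ⟨δ', hδ', hsub⟩ := ih _ hT
    have hc : ⌈β * x⌉ = d + 1 := by rw [eps_zero] at h0; omega
    have hgt : (d : ℝ) < β * x := by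
      have := Int.ceil_lt_add_one (β * x)
      rw [hc] at this
      push_cast at this
      linarith
    have hle : β * x ≤ (d : ℝ) + 1 := by
      have := Int.le_ceil (β * x)
      rw [hc] at this
      push_cast at this
      linarith
    set δ := min (min x ((β * x - d) / β)) (δ' / β) with hδdef
    refine ⟨δ, lt_min (lt_min hx1.1 (div_pos (by linarith) hβ)) (div_pos hδ' hβ), ?_⟩
    intro y hy
    obtain ⟨hy1, hy2⟩ := hy
    have hminx : δ ≤ x := le_trans (min_le_left _ _) (min_le_left _ _)
    have hmind : δ ≤ (β * x - d) / β := le_trans (min_le_left _ _) (min_le_right _ _)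
    have hminδ : δ ≤ δ' / β := min_le_right _ _
    have hy0 : 0 < y := by linarith
    have hyIoc : y ∈ Ioc (0:ℝ) 1 := ⟨hy0, le_trans hy2 hx1.2⟩
    have hby : (d : ℝ) < β * y := by
      have h1 : x - (β * x - d) / β < y := by linarith
      have h2 : β * (x - (β * x - d) / β) < β * y := mul_lt_mul_of_pos_left h1 hβ
      rw [mul_sub, mul_div_cancel₀ _ (ne_of_gt hβ)] at h2
      linarith
    have hbyle : β * y ≤ β * x := mul_le_mul_of_nonneg_left hy2 hβ.le
    have hcy : ⌈β * y⌉ = d + 1 := by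
      rw [Int.ceil_eq_iff]
      constructor
      · push_cast; linarith
      · push_cast; linarith
    have hey : eps β y 0 = d := by rw [eps_zero, hcy]; ring
    rw [mem_cyl_cons]
    refine ⟨hyIoc, hey, hsub ?_⟩
    rw [Set.mem_Ioc, Tbeta_eq_of_eps hey, Tbeta_eq_of_eps h0]
    constructor
    · have h1 : x - δ' / β < y := by linarith
      have h2 : β * (x - δ' / β) < β * y := mul_lt_mul_of_pos_left h1 hβ
      rw [mul_sub, mul_div_cancel₀ _ (ne_of_gt hβ)] at h2
      linarith
    · linarith

lemma mem_cyl_append {w w' : List ℤ} {x : ℝ} :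
    x ∈ cyl β (w ++ w') ↔ x ∈ cyl β w ∧ (Tbeta β)^[w.length] x ∈ cyl β w' := by
  induction w generalizing x with
  | nil =>
    simp only [List.nil_append, List.length_nil, Function.iterate_zero_apply]
    exact ⟨fun h => ⟨mem_cyl_nil.mpr h.1, h⟩, fun h => h.2⟩
  | cons d w ih =>
    simp only [List.cons_append, mem_cyl_cons, List.length_cons,
      Function.iterate_succ_apply, ih]
    tauto

lemma mem_cyl_self {y : ℝ} (hy : y ∈ Ioc (0:ℝ) 1) (m : ℕ) :
    y ∈ cyl β ((List.range m).map (eps β y)) := by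
  refine ⟨hy, ?_⟩
  intro j hj
  simp only [List.length_map, List.length_range] at hj
  rw [List.getD_eq_getElem?_getD]
  simp [List.getElem?_map, List.getElem?_range, hj]

lemma diam_cyl (hβ : 1 < β) {w : List ℤ} {u v : ℝ}
    (hu : u ∈ cyl β w) (hv : v ∈ cyl β w) : v - u < (β ^ w.length)⁻¹ := by
  have hp : (0:ℝ) < β ^ w.length := pow_pos (by linarith) _
  have h1 := iterate_eq_affine u hu
  have h2 := iterate_eq_affine v hv
  have hu1 := iterate_mem_Ioc (β := β) hu.1 w.length
  have hv1 := iterate_mem_Ioc (β := β) hv.1 w.length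
  rw [h1] at hu1
  rw [h2] at hv1
  have key : β ^ w.length * (v - u) < 1 := by
    have := hu1.1
    have := hv1.2
    nlinarith
  rw [inv_eq_one_div, lt_div_iff₀ hp]
  nlinarith

lemma Ioo_subset_cyl (hβ : 1 < β) {w : List ℤ} (h : (cyl β w).Nonempty) :
    Ioo (sInf (cyl β w)) (sSup (cyl β w)) ⊆ cyl β w := by
  intro y hy
  obtain ⟨u, hu, huy⟩ := exists_lt_of_csInf_lt h hy.1
  obtain ⟨v, hv, hyv⟩ := exists_lt_of_lt_csSup h hy.2
  exact cyl_ordConnected (by linarith) u hu v hv y huy.le hyv.le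

lemma len_cyl (hβ : 1 < β) {w : List ℤ} (h : (cyl β w).Nonempty) :
    len (cyl β w) = sSup (cyl β w) - sInf (cyl β w) := by
  set S := cyl β w
  have hbdd_above : BddAbove S := BddAbove.mono (cyl_subset_Ioc β w) bddAbove_Ioc
  have hbdd_below : BddBelow S := BddBelow.mono (cyl_subset_Ioc β w) bddBelow_Ioc
  have hab : sInf S ≤ sSup S := csInf_le_csSup h hbdd_below hbdd_above
  have hsub1 : Ioo (sInf S) (sSup S) ⊆ S := Ioo_subset_cyl hβ h
  have hsub2 : S ⊆ Icc (sInf S) (sSup S) := fun x hx =>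
    ⟨csInf_le hbdd_below hx, le_csSup hbdd_above hx⟩
  have hv : volume S = ENNReal.ofReal (sSup S - sInf S) := by
    apply le_antisymm
    · calc volume S ≤ volume (Icc (sInf S) (sSup S)) := measure_mono hsub2
        _ = ENNReal.ofReal (sSup S - sInf S) := Real.volume_Icc
    · calc ENNReal.ofReal (sSup S - sInf S) = volume (Ioo (sInf S) (sSup S)) :=
          Real.volume_Ioo.symm
        _ ≤ volume S := measure_mono hsub1
  rw [len, hv, ENNReal.toReal_ofReal (by linarith)]

lemma sub_le_of_cyl (hβ : 1 < β) {w : List ℤ} (h : (cyl β w).Nonempty) :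
    sSup (cyl β w) - sInf (cyl β w) ≤ (β ^ w.length)⁻¹ := by
  set S := cyl β w
  have hbdd_below : BddBelow S := BddBelow.mono (cyl_subset_Ioc β w) bddBelow_Ioc
  have h1 : sSup S ≤ sInf S + (β ^ w.length)⁻¹ := by
    apply csSup_le h
    intro v hv
    have h2 : v - (β ^ w.length)⁻¹ ≤ sInf S := by
      apply le_csInf h
      intro u hu
      have := diam_cyl hβ hu hv
      linarith
    linarith
  linarith

lemma zpow_neg_natCast (hβ : 1 < β) (n : ℕ) : β ^ (-(n : ℤ)) = (β ^ n)⁻¹ := by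
  rw [zpow_neg, zpow_natCast]

lemma surj_of_full (hβ : 1 < β) {w : List ℤ} (hadm : (cyl β w).Nonempty)
    (hfull : IsFull β w) {y : ℝ} (hy : y ∈ Ioo (0:ℝ) 1) :
    ∃ x ∈ cyl β w, (Tbeta β)^[w.length] x = y := by
  set S := cyl β w with hS
  set n := w.length
  set C := Cw β w
  have hb0 : (0:ℝ) < β := by linarith
  have hpn : (0:ℝ) < β ^ n := pow_pos hb0 n
  have hbdd_above : BddAbove S := BddAbove.mono (cyl_subset_Ioc β w) bddAbove_Ioc
  have hbdd_below : BddBelow S := BddBelow.mono (cyl_subset_Ioc β w) bddBelow_Ioc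
  set a := sInf S
  set b := sSup S
  have hba : b - a = (β ^ n)⁻¹ := by
    have hfull' : len (cyl β w) = β ^ (-(w.length : ℤ)) := hfull
    have h1 := len_cyl hβ hadm
    have h2 : len (cyl β w) = (β ^ n)⁻¹ := by rw [hfull', zpow_neg_natCast hβ]
    rw [h1] at h2
    exact h2
  have himg : ∀ x ∈ S, 0 < β ^ n * x - C ∧ β ^ n * x - C ≤ 1 := by
    intro x hx
    have h1 := iterate_eq_affine x hx
    have h2 := iterate_mem_Ioc (β := β) hx.1 n
    rw [h1] at h2
    exact ⟨h2.1, h2.2⟩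
  have hfa : 0 ≤ β ^ n * a - C := by
    have : C / β ^ n ≤ a := by
      apply le_csInf hadm
      intro x hx
      have := (himg x hx).1
      rw [div_le_iff₀ hpn]
      nlinarith
    nlinarith [mul_le_mul_of_nonneg_left this hpn.le, mul_div_cancel₀ C (ne_of_gt hpn)]
  have hfb : β ^ n * b - C ≤ 1 := by
    have : b ≤ (1 + C) / β ^ n := by
      apply csSup_le hadm
      intro x hx
      have := (himg x hx).2
      rw [le_div_iff₀ hpn]
      nlinarith
    nlinarith [mul_le_mul_of_nonneg_left this hpn.le, mul_div_cancel₀ (1 + C) (ne_of_gt hpn)]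
  have hdiff : β ^ n * b - β ^ n * a = 1 := by
    have : β ^ n * (b - a) = 1 := by
      rw [hba]
      field_simp
    nlinarith [this]
  have hfa0 : β ^ n * a - C = 0 := by linarith
  set x0 := (y + C) / β ^ n with hx0
  have hfx0 : β ^ n * x0 - C = y := by
    rw [hx0, mul_div_cancel₀ _ (ne_of_gt hpn)]
    ring
  have hx0ab : x0 ∈ Ioo a b := by
    constructor
    · nlinarith [hy.1]
    · nlinarith [hy.2]
  have hx0S : x0 ∈ S := Ioo_subset_cyl hβ hadm hx0ab
  exact ⟨x0, hx0S, by rw [iterate_eq_affine x0 hx0S, hfx0]⟩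

end Aux

/-- Let `(ε_1,…,ε_n)` be an admissible word, `n ≥ 1`. The basic interval
`I(ε_1,…,ε_n)` is full (its length is `β^{−n}`) if and only if for every `m ≥ 1` and every
admissible word `(ε'_1,…,ε'_m)` the concatenation `(ε_1,…,ε_n,ε'_1,…,ε'_m)` is admissible. -/
theorem full_iff_concat_admissible (β : ℝ) (hβ : 1 < β) (w : List ℤ)
    (hn : 1 ≤ w.length) (hadm : Admissible β w) :
    IsFull β w ↔ ∀ w' : List ℤ, 1 ≤ w'.length → Admissible β w' → Admissible β (w ++ w') := by
  have hb0 : (0:ℝ) < β := by linarith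
  constructor
  · intro hfull w' hm hadm'
    obtain ⟨x', hx'⟩ := hadm'
    obtain ⟨δ, hδ, hsub⟩ := exists_Ioc_subset_cyl hb0 x' hx'
    have hx'Ioc : x' ∈ Ioc (0:ℝ) 1 := hx'.1
    have hmpos : 0 < min (δ/2) (x'/2) := lt_min (by linarith) (by linarith [hx'Ioc.1])
    have hm1 : min (δ/2) (x'/2) ≤ δ/2 := min_le_left _ _
    have hm2 : min (δ/2) (x'/2) ≤ x'/2 := min_le_right _ _
    have hy1 : x' - min (δ/2) (x'/2) ∈ Ioo (0:ℝ) 1 := by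
      constructor
      · linarith [hx'Ioc.1]
      · linarith [hx'Ioc.2]
    have hycyl : x' - min (δ/2) (x'/2) ∈ cyl β w' := by
      apply hsub
      constructor
      · linarith
      · linarith
    obtain ⟨x, hxS, hxy⟩ := surj_of_full hβ hadm hfull hy1
    exact ⟨x, mem_cyl_append.mpr ⟨hxS, by rw [hxy]; exact hycyl⟩⟩
  · intro H
    set S := cyl β w with hS
    set n := w.length with hn'
    set C := Cw β w with hC
    have hpn : (0:ℝ) < β ^ n := pow_pos hb0 n
    have hbdd_above : BddAbove S := BddAbove.mono (cyl_subset_Ioc β w) bddAbove_Ioc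
    have hbdd_below : BddBelow S := BddBelow.mono (cyl_subset_Ioc β w) bddBelow_Ioc
    have hadm0 : S.Nonempty := hadm
    set a := sInf S with ha
    set b := sSup S with hb
    have hlen := len_cyl hβ hadm0
    have hle := sub_le_of_cyl hβ hadm0
    have hge : (β ^ n)⁻¹ ≤ b - a := by
      by_contra hlt
      push_neg at hlt
      have hab : a ≤ b := csInf_le_csSup hadm0 hbdd_below hbdd_above
      have hD0 : 0 ≤ β ^ n * (b - a) := by nlinarith
      have hD1 : β ^ n * (b - a) < 1 := by
        have h := mul_lt_mul_of_pos_left hlt hpn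
        rwa [mul_inv_cancel₀ (ne_of_gt hpn)] at h
      have hρ : 0 < (1 - β ^ n * (b - a))/3 := by linarith
      set ρ := (1 - β ^ n * (b - a))/3 with hρdef
      have hρ3 : ρ ≤ 1/3 := by rw [hρdef]; linarith
      have himg : ∀ x ∈ S, (Tbeta β)^[n] x ∈ Ioc (0:ℝ) 1 ∧
          β ^ n * a - C ≤ (Tbeta β)^[n] x ∧ (Tbeta β)^[n] x ≤ β ^ n * b - C := by
        intro x hx
        have h1 := iterate_eq_affine x hx
        have h2 := iterate_mem_Ioc (β := β) hx.1 n
        have hax : a ≤ x := csInf_le hbdd_below hx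
        have hxb : x ≤ b := le_csSup hbdd_above hx
        refine ⟨h2, ?_, ?_⟩ <;> rw [h1]
        · nlinarith
        · nlinarith
      obtain ⟨y, hyIoc, hfar⟩ :
          ∃ y ∈ Ioc (0:ℝ) 1, ∀ x ∈ S, ρ ≤ |(Tbeta β)^[n] x - y| := by
        by_cases hcase : β ^ n * b - C ≤ 1 - ρ
        · refine ⟨1, ⟨one_pos, le_refl 1⟩, ?_⟩
          intro x hx
          obtain ⟨h2, h3, h4⟩ := himg x hx
          rw [abs_sub_comm, abs_of_nonneg (by linarith [h2.2])]
          linarith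
        · push_neg at hcase
          refine ⟨ρ, ⟨hρ, by linarith⟩, ?_⟩
          intro x hx
          obtain ⟨h2, h3, h4⟩ := himg x hx
          have hba' : (β ^ n * b - C) - (β ^ n * a - C) = β ^ n * (b - a) := by ring
          have hfa : 2*ρ < β ^ n * a - C := by
            rw [hρdef]
            linarith
          rw [abs_of_nonneg (by linarith)]
          linarith
      obtain ⟨N, hN⟩ := pow_unbounded_of_one_lt (ρ⁻¹) hβ
      set m := max N 1 with hm
      have hpm : (0:ℝ) < β ^ m := pow_pos hb0 m
      have hβm : ρ⁻¹ < β ^ m :=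
        lt_of_lt_of_le hN (pow_le_pow_right₀ (by linarith) (le_max_left _ _))
      have h1ρm : 1 < ρ * β ^ m := by
        have h := mul_lt_mul_of_pos_left hβm hρ
        rwa [mul_inv_cancel₀ (ne_of_gt hρ)] at h
      have hinv : (β ^ m)⁻¹ * β ^ m = 1 := inv_mul_cancel₀ (ne_of_gt hpm)
      have hminv : (β ^ m)⁻¹ < ρ := by nlinarith [hinv, h1ρm, hpm, hρ]
      have hyw' : y ∈ cyl β ((List.range m).map (eps β y)) := mem_cyl_self hyIoc m
      have hw'len : ((List.range m).map (eps β y)).length = m := by simp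
      obtain ⟨x, hx⟩ := H ((List.range m).map (eps β y))
        (by rw [hw'len]; exact le_max_right N 1) ⟨y, hyw'⟩
      rw [mem_cyl_append] at hx
      obtain ⟨hxS, hxT⟩ := hx
      have hd1 := diam_cyl hβ hxT hyw'
      have hd2 := diam_cyl hβ hyw' hxT
      rw [hw'len] at hd1 hd2
      have habs : |(Tbeta β)^[n] x - y| < (β ^ m)⁻¹ := abs_sub_lt_iff.mpr ⟨hd2, hd1⟩
      have hfarx := hfar x hxS
      linarith
    have hba : b - a = (β ^ n)⁻¹ := le_antisymm hle hge
    show len (cyl β w) = β ^ (-(w.length : ℤ))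
    rw [hlen, zpow_neg_natCast hβ]
    exact hba
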